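/- Suppose two sequences of natural numbers (a_k) and (b_k) satisfy: (1) there are finitely many nonzero integers n_i and distinct nonzero algebraic numbers α_i with a_k − b_k = Σ_i n_i α_i^k for all k ≥ 1; (2) for some constant c ≥ 0 and prime power q, a_k ≡ b_k mod q^{⌈k−c⌉} (as p-adic integers, for any embedding into C_p) for all k ≥ c. Then a_k ≡ b_k mod q^k for all k ≥ 1. -/

import Mathlib

theorem vsum_le {K : Type*} [Field K] (v : K → WithTop ℝ)
    (hv0 : v 0 = ⊤) (hvadd : ∀ x y : K, min (v x) (v y) ≤ v (x + y))
    {ι : Type*} (s : Finset ι) (g : ι → K) (B : WithTop ℝ)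
    (hB : ∀ i ∈ s, B ≤ v (g i)) : B ≤ v (∑ i ∈ s, g i) := by
  classical
  induction s using Finset.induction with
  | empty => simp [hv0]
  | insert _ _ h ih =>
      rw [Finset.sum_insert h]
      refine le_trans ?_ (hvadd _ _)
      exact le_min (hB _ (by simp)) (ih fun i hi => hB i (by simp [hi]))

/-- `K` plays the role of `ℂ_p` (with a fixed embedding of the field generated by the
`α i`), equipped with the additive valuation `v = v_q` normalized by `v q = 1`.
The hypothesis `hv_int` expresses that `v` restricts to the `q`-adic valuation on `ℤ`. -/
theorem mirror_congruence_improvement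
    {K : Type*} [Field K] [CharZero K] (v : K → WithTop ℝ)
    (hv0 : ∀ x : K, v x = ⊤ ↔ x = 0)
    (hvmul : ∀ x y : K, v (x * y) = v x + v y)
    (hvadd : ∀ x y : K, min (v x) (v y) ≤ v (x + y))
    (p : ℕ) (hp : p.Prime) (f : ℕ) (hf : 1 ≤ f) (q : ℕ) (hqpf : q = p ^ f)
    (hq : v (q : K) = (1 : ℝ))
    (hv_int : ∀ (z : ℤ) (j : ℕ), ((j : ℝ) : WithTop ℝ) ≤ v ((z : K)) ↔ (q : ℤ) ^ j ∣ z)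
    (a b : ℕ → ℕ)
    (m : ℕ) (α : Fin m → K) (hαne : ∀ i, α i ≠ 0) (hαdist : Function.Injective α)
    (n : Fin m → ℤ) (hn : ∀ i, n i ≠ 0)
    (hab : ∀ k : ℕ, 1 ≤ k → (a k : K) - (b k : K) = ∑ i, (n i : K) * α i ^ k)
    (c : ℝ) (hc : 0 ≤ c)
    (hcong : ∀ k : ℕ, c ≤ (k : ℝ) → (((k : ℝ) - c : ℝ) : WithTop ℝ) ≤ v ((a k : K) - (b k : K))) :
    ∀ k : ℕ, 1 ≤ k → (q : ℤ) ^ k ∣ ((a k : ℤ) - (b k : ℤ)) := by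
  classical
  have hvzero : v 0 = ⊤ := (hv0 0).mpr rfl
  -- v 1 = 0
  have hv1 : v 1 = (0 : ℝ) := by
    have h1 : v (1 : K) ≠ ⊤ := fun h => one_ne_zero ((hv0 1).mp h)
    obtain ⟨r, hr⟩ := WithTop.ne_top_iff_exists.mp h1
    have := hvmul 1 1
    rw [one_mul, ← hr, ← WithTop.coe_add] at this
    have : r = r + r := WithTop.coe_injective this
    have : r = 0 := by linarith
    rw [← hr, this]
  -- v of a nonzero element is a real
  have hfin : ∀ x : K, x ≠ 0 → ∃ r : ℝ, v x = r := by
    intro x hx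
    exact WithTop.ne_top_iff_exists.mp (fun h => hx ((hv0 x).mp h)) |>.imp fun r hr => hr.symm
  -- v (x ^ k) = k * v x
  have hvpow : ∀ (x : K) (t : ℝ), v x = t → ∀ k : ℕ, v (x ^ k) = ((k * t : ℝ) : WithTop ℝ) := by
    intro x t ht k
    induction k with
    | zero => simpa using hv1
    | succ k ih =>
        rw [pow_succ, hvmul, ih, ht, ← WithTop.coe_add, WithTop.coe_eq_coe]
        push_cast
        ring
  -- v (n i) ≥ 0 for each integer
  have hvint_nonneg : ∀ z : ℤ, ((0 : ℝ) : WithTop ℝ) ≤ v (z : K) := by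
    intro z
    have := (hv_int z 0).mpr (by simp)
    simpa using this
  -- the values t i = v (α i)
  choose t ht using fun i => hfin (α i) (hαne i)
  choose N hN using fun i => hfin ((n i : K)) (by exact_mod_cast hn i)
  -- Key claim: t i ≥ 1 for all i
  have hkey : ∀ i0 : Fin m, (1 : ℝ) ≤ t i0 := by
    intro i0
    -- Vandermonde matrix
    set V : Matrix (Fin m) (Fin m) K := fun j i => α i ^ (j : ℕ) with hV
    have hdet : IsUnit V.det := by
      have hVt : V = Matrix.transpose (Matrix.vandermonde α) := by
        ext j i; simp [hV, Matrix.vandermonde, Matrix.transpose]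
      rw [hVt, Matrix.det_transpose, Matrix.det_vandermonde]
      rw [isUnit_iff_ne_zero]
      refine Finset.prod_ne_zero_iff.mpr fun i _ => Finset.prod_ne_zero_iff.mpr fun j hj => ?_
      have : i ≠ j := ne_of_lt (Finset.mem_Ioi.mp hj)
      exact sub_ne_zero.mpr fun h => this (hαdist h).symm
    set cf : Fin m → K := fun j => V⁻¹ i0 j with hcf
    -- key linear-algebra identity
    have hkeyeq : ∀ k : ℕ,
        (n i0 : K) * α i0 ^ k = ∑ j : Fin m, cf j * ∑ i : Fin m, (n i : K) * α i ^ (k + (j : ℕ)) := by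
      intro k
      set x : Fin m → K := fun i => (n i : K) * α i ^ k with hx
      have hVx : V.mulVec x = fun j : Fin m => ∑ i : Fin m, (n i : K) * α i ^ (k + (j : ℕ)) := by
        funext j
        simp only [Matrix.mulVec, dotProduct, hV, hx]
        refine Finset.sum_congr rfl fun i _ => ?_
        rw [pow_add]; ring
      have hinv : V⁻¹.mulVec (V.mulVec x) = x := by
        rw [Matrix.mulVec_mulVec, Matrix.nonsing_inv_mul _ hdet, Matrix.one_mulVec]
      calc (n i0 : K) * α i0 ^ k = x i0 := rfl
        _ = (V⁻¹.mulVec (V.mulVec x)) i0 := by rw [hinv]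
        _ = ∑ j : Fin m, cf j * ∑ i : Fin m, (n i : K) * α i ^ (k + (j : ℕ)) := by
            rw [hVx]; simp [Matrix.mulVec, dotProduct, hcf]
    -- lower bound D for v (cf j)
    set g : Fin m → ℝ := fun j => WithTop.untopD 0 (v (cf j)) with hg
    have hm : Nonempty (Fin m) := ⟨i0⟩
    set D : ℝ := Finset.univ.inf' Finset.univ_nonempty g with hD
    have hDle : ∀ j : Fin m, ((D : ℝ) : WithTop ℝ) ≤ v (cf j) := by
      intro j
      have h1 : D ≤ g j := Finset.inf'_le _ (Finset.mem_univ j)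
      cases hvc : v (cf j) with
      | top => exact le_top
      | coe r =>
          have : g j = r := by simp [hg, hvc]
          exact_mod_cast (h1.trans (le_of_eq this))
    -- main inequality for each large k
    have hineq : ∀ k : ℕ, 1 ≤ k → c ≤ (k : ℝ) → D + ((k : ℝ) - c) ≤ N i0 + (k : ℝ) * t i0 := by
      intro k hk1 hkc
      have hlhs : v ((n i0 : K) * α i0 ^ k) = ((N i0 + (k : ℝ) * t i0 : ℝ) : WithTop ℝ) := by
        rw [hvmul, hN, hvpow _ _ (ht i0), ← WithTop.coe_add]
      have hrhs : ((D + ((k : ℝ) - c) : ℝ) : WithTop ℝ) ≤ v ((n i0 : K) * α i0 ^ k) := by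
        rw [hkeyeq k]
        refine vsum_le v hvzero hvadd _ _ _ fun j _ => ?_
        rw [hvmul]
        have hsj : (((k : ℝ) - c : ℝ) : WithTop ℝ) ≤ v (∑ i : Fin m, (n i : K) * α i ^ (k + (j : ℕ))) := by
          have hk1' : 1 ≤ k + (j : ℕ) := le_trans hk1 (Nat.le_add_right _ _)
          have hkc' : c ≤ ((k + (j : ℕ) : ℕ) : ℝ) := by push_cast; linarith [Nat.cast_nonneg (α := ℝ) (j : ℕ)]
          have := hcong (k + (j : ℕ)) hkc'
          rw [hab _ hk1'] at this
          refine le_trans ?_ this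
          have : ((k : ℝ) - c) ≤ (((k + (j : ℕ) : ℕ) : ℝ) - c) := by push_cast; linarith [Nat.cast_nonneg (α := ℝ) (j : ℕ)]
          exact_mod_cast this
        calc ((D + ((k : ℝ) - c) : ℝ) : WithTop ℝ)
            = ((D : ℝ) : WithTop ℝ) + (((k : ℝ) - c : ℝ) : WithTop ℝ) := by rw [← WithTop.coe_add]
          _ ≤ v (cf j) + v (∑ i : Fin m, (n i : K) * α i ^ (k + (j : ℕ))) := add_le_add (hDle j) hsj
      rw [hlhs] at hrhs
      exact_mod_cast hrhs
    -- conclude t i0 ≥ 1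
    by_contra hlt
    push_neg at hlt
    obtain ⟨k, hk⟩ := exists_nat_gt (max ((N i0 + c - D) / (1 - t i0)) (max c 1))
    have hkc : c ≤ (k : ℝ) := le_trans (le_trans (le_max_left _ _) (le_max_right _ _)) hk.le
    have hk1 : 1 ≤ k := by
      have : (1 : ℝ) ≤ (k : ℝ) := le_trans (le_trans (le_max_right _ _) (le_max_right _ _)) hk.le
      exact_mod_cast this
    have h1 := hineq k hk1 hkc
    have h2 : (N i0 + c - D) / (1 - t i0) < (k : ℝ) := lt_of_le_of_lt (le_max_left _ _) hk
    have h3 : N i0 + c - D < (k : ℝ) * (1 - t i0) := by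
      rw [div_lt_iff₀ (by linarith)] at h2; linarith [h2]
    nlinarith [h1, h3]
  -- final conclusion
  intro k hk1
  have hcast : (((a k : ℤ) - (b k : ℤ) : ℤ) : K) = (a k : K) - (b k : K) := by push_cast; ring
  rw [← hv_int]
  rw [hcast, hab k hk1]
  refine vsum_le v hvzero hvadd _ _ _ fun i _ => ?_
  rw [hvmul, hvpow _ _ (ht i)]
  have h1 : ((k : ℝ) : WithTop ℝ) ≤ ((k * t i : ℝ) : WithTop ℝ) := by
    have : (k : ℝ) ≤ k * t i := by nlinarith [hkey i, Nat.cast_nonneg (α := ℝ) k]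
    exact_mod_cast this
  refine le_trans h1 (le_add_of_nonneg_left ?_)
  exact_mod_cast hvint_nonneg (n i)
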